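/- In the noise-free setting under Assumption 1, let A ⊆ A† with B = A†∖A, let d ∈ ℝ^p have |d_i| = λ for all i ∈ A, let x_A = (Ψ_AᵗΨ_A)⁻¹(Ψ_Aᵗ y − d_A), and let i_A be an index maximizing |x†_i| over i ∈ A^c. Then ‖x_A + d_A − x†_A‖₂ ≤ ¼|x†_{i_A}| + ¼λ. -/

import Mathlib

open Matrix

/-- The submatrix `Ψ_A` of `Ψ` consisting of the columns indexed by `A`. -/
def colSub {n p : ℕ} (Ψ : Matrix (Fin n) (Fin p) ℝ) (A : Finset (Fin p)) :
    Matrix (Fin n) {i // i ∈ A} ℝ :=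
  Matrix.of fun i j => Ψ i j.1

/-- `Ψ` satisfies the restricted isometry property of order `k` with constant `δ`:
`(1 − δ)‖x‖₂² ≤ ‖Ψx‖₂² ≤ (1 + δ)‖x‖₂²` for all `x` with at most `k` nonzero entries. -/
def HasRIP {n p : ℕ} (Ψ : Matrix (Fin n) (Fin p) ℝ) (k : ℕ) (δ : ℝ) : Prop :=
  ∀ x : Fin p → ℝ, (Finset.univ.filter (fun i => x i ≠ 0)).card ≤ k →
    (1 - δ) * (∑ i, x i ^ 2) ≤ ∑ j, (Ψ *ᵥ x) j ^ 2 ∧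
      ∑ j, (Ψ *ᵥ x) j ^ 2 ≤ (1 + δ) * (∑ i, x i ^ 2)

namespace Stmt11Aux

/-- Extension of a vector on `A` by zero. -/
def extv {p : ℕ} (A : Finset (Fin p)) (v : {i // i ∈ A} → ℝ) : Fin p → ℝ :=
  fun i => if h : i ∈ A then v ⟨i, h⟩ else 0

lemma sum_mul_ext {p : ℕ} (A : Finset (Fin p)) (g : Fin p → ℝ) (v : {i // i ∈ A} → ℝ) :
    ∑ i, g i * extv A v i = ∑ j : {i // i ∈ A}, g j.1 * v j := by
  rw [← Finset.sum_subset A.subset_univ (fun j _ hj => by simp [extv, hj]),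
    ← Finset.sum_coe_sort A (fun j => g j * extv A v j)]
  exact Finset.sum_congr rfl fun j _ => by simp [extv, j.2]

lemma ext_mulVec {n p : ℕ} (Ψ : Matrix (Fin n) (Fin p) ℝ) (A : Finset (Fin p))
    (v : {i // i ∈ A} → ℝ) :
    Ψ *ᵥ extv A v = colSub Ψ A *ᵥ v := by
  funext i
  simpa [Matrix.mulVec, dotProduct, colSub] using sum_mul_ext A (fun j => Ψ i j) v

lemma dot_ext_ext {p : ℕ} (A : Finset (Fin p)) (u v : {i // i ∈ A} → ℝ) :
    ∑ i, extv A u i * extv A v i = ∑ j : {i // i ∈ A}, u j * v j := by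
  rw [sum_mul_ext A (extv A u) v]
  exact Finset.sum_congr rfl fun j _ => by simp [extv, j.2]

lemma sum_sq_ext {p : ℕ} (A : Finset (Fin p)) (v : {i // i ∈ A} → ℝ) :
    ∑ i, extv A v i ^ 2 = ∑ j : {i // i ∈ A}, v j ^ 2 := by
  simpa [pow_two] using dot_ext_ext A v v

lemma supp_ext {p : ℕ} (A : Finset (Fin p)) (v : {i // i ∈ A} → ℝ) :
    (Finset.univ.filter fun i => extv A v i ≠ 0) ⊆ A := by
  intro i hi
  simp only [Finset.mem_filter] at hi
  by_contra h
  exact hi.2 (by simp [extv, h])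

lemma rip_abs {n p k : ℕ} {Ψ : Matrix (Fin n) (Fin p) ℝ} {δ : ℝ}
    (hRIP : HasRIP Ψ k δ) (x : Fin p → ℝ)
    (hs : (Finset.univ.filter fun i => x i ≠ 0).card ≤ k) :
    |∑ j, (Ψ *ᵥ x) j ^ 2 - ∑ i, x i ^ 2| ≤ δ * ∑ i, x i ^ 2 := by
  obtain ⟨h1, h2⟩ := hRIP x hs
  rw [abs_le]; constructor <;> nlinarith

lemma sum_sq_comb {N : ℕ} (f g : Fin N → ℝ) (c1 c2 : ℝ) :
    ∑ i, (c1 * f i + c2 * g i) ^ 2 =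
      c1 ^ 2 * ∑ i, f i ^ 2 + 2 * c1 * c2 * ∑ i, f i * g i + c2 ^ 2 * ∑ i, g i ^ 2 := by
  rw [Finset.mul_sum, Finset.mul_sum, Finset.mul_sum, ← Finset.sum_add_distrib,
    ← Finset.sum_add_distrib]
  exact Finset.sum_congr rfl fun i _ => by ring

lemma cross {n p k : ℕ} {Ψ : Matrix (Fin n) (Fin p) ℝ} {δ : ℝ} (hδ : 0 ≤ δ)
    (hRIP : HasRIP Ψ k δ) (u v : Fin p → ℝ)
    (hsupp : (Finset.univ.filter fun i => u i ≠ 0 ∨ v i ≠ 0).card ≤ k) :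
    |∑ j, (Ψ *ᵥ u) j * (Ψ *ᵥ v) j - ∑ i, u i * v i| ≤
      δ * Real.sqrt (∑ i, u i ^ 2) * Real.sqrt (∑ i, v i ^ 2) := by
  set a := Real.sqrt (∑ i, u i ^ 2) with ha
  set b := Real.sqrt (∑ i, v i ^ 2) with hb
  have ha0 : 0 ≤ a := Real.sqrt_nonneg _
  have hb0 : 0 ≤ b := Real.sqrt_nonneg _
  have ha2 : a ^ 2 = ∑ i, u i ^ 2 := Real.sq_sqrt (by positivity)
  have hb2 : b ^ 2 = ∑ i, v i ^ 2 := Real.sq_sqrt (by positivity)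
  by_cases hae : ∑ i, u i ^ 2 = 0
  · have hu : u = 0 := by
      funext i
      have := (Finset.sum_eq_zero_iff_of_nonneg (fun i _ => sq_nonneg (u i))).1 hae i
        (Finset.mem_univ i)
      exact pow_eq_zero_iff (by norm_num) |>.1 this
    simp [hu, Matrix.mulVec_zero]
    positivity
  by_cases hbe : ∑ i, v i ^ 2 = 0
  · have hv : v = 0 := by
      funext i
      have := (Finset.sum_eq_zero_iff_of_nonneg (fun i _ => sq_nonneg (v i))).1 hbe i
        (Finset.mem_univ i)
      exact pow_eq_zero_iff (by norm_num) |>.1 this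
    simp [hv, Matrix.mulVec_zero]
    positivity
  have hapos : 0 < a := Real.sqrt_pos.2 (lt_of_le_of_ne (by positivity) (Ne.symm hae))
  have hbpos : 0 < b := Real.sqrt_pos.2 (lt_of_le_of_ne (by positivity) (Ne.symm hbe))
  set P : Fin p → ℝ := b • u + a • v with hP
  set Q : Fin p → ℝ := b • u + (-a) • v with hQ
  have hPs : (Finset.univ.filter fun i => P i ≠ 0).card ≤ k := by
    refine le_trans (Finset.card_le_card ?_) hsupp
    intro i hi
    simp only [Finset.mem_filter, Finset.mem_univ, true_and] at hi ⊢
    by_contra h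
    push_neg at h
    exact hi (by simp [hP, h.1, h.2])
  have hQs : (Finset.univ.filter fun i => Q i ≠ 0).card ≤ k := by
    refine le_trans (Finset.card_le_card ?_) hsupp
    intro i hi
    simp only [Finset.mem_filter, Finset.mem_univ, true_and] at hi ⊢
    by_contra h
    push_neg at h
    exact hi (by simp [hQ, h.1, h.2])
  have h1 := rip_abs hRIP P hPs
  have h2 := rip_abs hRIP Q hQs
  set X := ∑ i, u i * v i with hX
  set XP := ∑ j, (Ψ *ᵥ u) j * (Ψ *ᵥ v) j with hXP
  have hPapp : ∀ i, P i = b * u i + a * v i := fun i => by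
    simp [hP, smul_eq_mul]
  have hQapp : ∀ i, Q i = b * u i + (-a) * v i := fun i => by
    simp [hQ, smul_eq_mul]
  have hMP : ∀ j, (Ψ *ᵥ P) j = b * (Ψ *ᵥ u) j + a * (Ψ *ᵥ v) j := fun j => by
    simp [hP, Matrix.mulVec_add, Matrix.mulVec_smul, smul_eq_mul]
  have hMQ : ∀ j, (Ψ *ᵥ Q) j = b * (Ψ *ᵥ u) j + (-a) * (Ψ *ᵥ v) j := fun j => by
    simp [hQ, Matrix.mulVec_add, Matrix.mulVec_smul, Matrix.mulVec_neg, neg_smul,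
      smul_eq_mul]
  have hPsum : ∑ i, P i ^ 2 = b ^ 2 * a ^ 2 + 2 * b * a * X + a ^ 2 * b ^ 2 := by
    simp_rw [hPapp]
    rw [sum_sq_comb u v b a, ← ha2, ← hb2, ← hX]
  have hQsum : ∑ i, Q i ^ 2 = b ^ 2 * a ^ 2 + 2 * b * (-a) * X + a ^ 2 * b ^ 2 := by
    simp_rw [hQapp]
    rw [sum_sq_comb u v b (-a), ← ha2, ← hb2, ← hX]
    ring
  have hPsum' : ∑ j, (Ψ *ᵥ P) j ^ 2 =
      b ^ 2 * ∑ j, (Ψ *ᵥ u) j ^ 2 + 2 * b * a * XP + a ^ 2 * ∑ j, (Ψ *ᵥ v) j ^ 2 := by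
    simp_rw [hMP]
    rw [sum_sq_comb _ _ b a, ← hXP]
  have hQsum' : ∑ j, (Ψ *ᵥ Q) j ^ 2 =
      b ^ 2 * ∑ j, (Ψ *ᵥ u) j ^ 2 + 2 * b * (-a) * XP + a ^ 2 * ∑ j, (Ψ *ᵥ v) j ^ 2 := by
    simp_rw [hMQ]
    rw [sum_sq_comb _ _ b (-a), ← hXP]
    ring
  have key : 4 * a * b * (XP - X) =
      (∑ j, (Ψ *ᵥ P) j ^ 2 - ∑ i, P i ^ 2) - (∑ j, (Ψ *ᵥ Q) j ^ 2 - ∑ i, Q i ^ 2) := by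
    rw [hPsum, hQsum, hPsum', hQsum']; ring
  have sumPQ : ∑ i, P i ^ 2 + ∑ i, Q i ^ 2 = 4 * (a * b) ^ 2 := by
    rw [hPsum, hQsum]; ring
  have h4ab : (0:ℝ) < 4 * a * b := by positivity
  have chain : 4 * a * b * |XP - X| ≤ 4 * a * b * (δ * a * b) := by
    calc 4 * a * b * |XP - X| = |4 * a * b * (XP - X)| := by
          rw [abs_mul, abs_of_pos h4ab]
      _ = |(∑ j, (Ψ *ᵥ P) j ^ 2 - ∑ i, P i ^ 2) - (∑ j, (Ψ *ᵥ Q) j ^ 2 - ∑ i, Q i ^ 2)| := by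
          rw [key]
      _ ≤ |∑ j, (Ψ *ᵥ P) j ^ 2 - ∑ i, P i ^ 2| + |∑ j, (Ψ *ᵥ Q) j ^ 2 - ∑ i, Q i ^ 2| := by
          rw [sub_eq_add_neg]
          exact (abs_add_le _ _).trans (by rw [abs_neg])
      _ ≤ δ * ∑ i, P i ^ 2 + δ * ∑ i, Q i ^ 2 := add_le_add h1 h2
      _ = δ * (∑ i, P i ^ 2 + ∑ i, Q i ^ 2) := by ring
      _ = 4 * a * b * (δ * a * b) := by rw [sumPQ]; ring
  have hfin := (mul_le_mul_iff_right₀ h4ab).1 chain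
  calc |XP - X| ≤ δ * a * b := hfin
    _ = δ * a * b := rfl

lemma dot_tr {n : ℕ} {α : Type*} [Fintype α] (C : Matrix (Fin n) α ℝ) (e : α → ℝ)
    (w : Fin n → ℝ) :
    ∑ j, e j * (Cᵀ *ᵥ w) j = ∑ i, (C *ᵥ e) i * w i := by
  have h : e ⬝ᵥ (Cᵀ *ᵥ w) = (C *ᵥ e) ⬝ᵥ w := by
    rw [Matrix.dotProduct_mulVec, Matrix.vecMul_transpose]
  simpa [dotProduct] using h

end Stmt11Aux

open Stmt11Aux in
set_option maxHeartbeats 1000000 in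
/-- under Assumption 1, the active-set error is bounded by `¼|x†_{i_A}| + ¼λ`. -/
theorem stmt_11 {n p : ℕ} (Ψ : Matrix (Fin n) (Fin p) ℝ)
    (xdag : Fin p → ℝ) (Adag : Finset (Fin p))
    (hAdag : Adag = Finset.univ.filter (fun i => xdag i ≠ 0))
    (T : ℕ) (hT : T = Adag.card)
    (y : Fin n → ℝ) (hy : y = Ψ *ᵥ xdag)
    (δ : ℝ) (hδ0 : 0 < δ) (hδ1 : δ < 1)
    (hRIP : HasRIP Ψ (T + 1) δ)
    (hAss1 : δ ≤ 1 / (4 * Real.sqrt T + 1))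
    (lam : ℝ) (hlam : 0 < lam)
    (A : Finset (Fin p)) (hA : A ⊆ Adag)
    (B : Finset (Fin p)) (hB : B = Adag \ A)
    (d : Fin p → ℝ) (hdA : ∀ i ∈ A, |d i| = lam)
    (xA : {i // i ∈ A} → ℝ)
    (hxA : xA = ((colSub Ψ A)ᵀ * colSub Ψ A)⁻¹ *ᵥ ((colSub Ψ A)ᵀ *ᵥ y - fun j => d j.1))
    (iA : Fin p) (hiA : iA ∉ A) (hmax : ∀ j ∉ A, |xdag j| ≤ |xdag iA|) :
    Real.sqrt (∑ j : {i // i ∈ A}, (xA j + d j.1 - xdag j.1) ^ 2) ≤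
      1 / 4 * |xdag iA| + 1 / 4 * lam := by
  classical
  have hrhs0 : 0 ≤ 1 / 4 * |xdag iA| + 1 / 4 * lam := by positivity
  set m := |xdag iA| with hm
  have hm0 : 0 ≤ m := abs_nonneg _
  by_cases hAe : A = ∅
  · have : ∑ j : {i // i ∈ A}, (xA j + d j.1 - xdag j.1) ^ 2 = 0 := by
      apply Finset.sum_eq_zero
      intro j _
      exact absurd j.2 (Finset.eq_empty_iff_forall_notMem.1 hAe j.1)
    rw [this, Real.sqrt_zero]
    exact hrhs0
  -- basic cardinalities
  have hAcard : A.card ≤ T := hT ▸ Finset.card_le_card hA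
  have hBsub : B ⊆ Adag := hB ▸ Finset.sdiff_subset
  have hBcard : B.card ≤ T := hT ▸ Finset.card_le_card hBsub
  have hdisj : Disjoint A B := hB ▸ Finset.disjoint_sdiff
  have hABun : A ∪ B = Adag := hB ▸ Finset.union_sdiff_of_subset hA
  have hABcard : (A ∪ B).card = T := by rw [hABun, hT]
  have hT1 : 1 ≤ T := by
    obtain ⟨i, hi⟩ := Finset.nonempty_iff_ne_empty.2 hAe
    calc 1 ≤ A.card := Finset.card_pos.2 ⟨i, hi⟩
      _ ≤ T := hAcard
  set s := Real.sqrt T with hs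
  have hs1 : 1 ≤ s := by
    rw [hs]
    rw [show (1:ℝ) = Real.sqrt 1 by simp]
    exact Real.sqrt_le_sqrt (by exact_mod_cast hT1)
  have hs0 : 0 < s := lt_of_lt_of_le one_pos hs1
  -- RIP lower bound for vectors supported on A
  set C := colSub Ψ A with hC
  set M := Cᵀ * C with hMdef
  have hlow : ∀ v : {i // i ∈ A} → ℝ,
      (1 - δ) * ∑ j : {i // i ∈ A}, v j ^ 2 ≤ ∑ j, (C *ᵥ v) j ^ 2 := by
    intro v
    have hsupp : (Finset.univ.filter fun i => extv A v i ≠ 0).card ≤ T + 1 :=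
      le_trans (Finset.card_le_card (supp_ext A v)) (le_trans hAcard (Nat.le_succ T))
    have h := (hRIP _ hsupp).1
    rwa [sum_sq_ext, ext_mulVec, ← hC] at h
  -- positive definiteness and invertibility of M
  have hPD : M.PosDef := by
    rw [Matrix.posDef_iff_dotProduct_mulVec]
    constructor
    · simpa using Matrix.isHermitian_conjTranspose_mul_self C
    · intro x hx
      have h1 : star x ⬝ᵥ (M *ᵥ x) = ∑ j, (C *ᵥ x) j ^ 2 := by
        rw [show (star x) = x from rfl, hMdef, ← Matrix.mulVec_mulVec,
          Matrix.dotProduct_mulVec, Matrix.vecMul_transpose]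
        simp [dotProduct, pow_two]
      rw [h1]
      obtain ⟨j0, hj0⟩ := Function.ne_iff.1 hx
      have hpos : 0 < ∑ j : {i // i ∈ A}, x j ^ 2 := by
        have h2 : (0:ℝ) < x j0 ^ 2 := pow_two_pos_of_ne_zero hj0
        exact lt_of_lt_of_le h2
          (Finset.single_le_sum (fun i _ => sq_nonneg (x i)) (Finset.mem_univ j0))
      calc (0:ℝ) < (1 - δ) * ∑ j : {i // i ∈ A}, x j ^ 2 := by nlinarith
        _ ≤ _ := hlow x
  have hdet : IsUnit M.det := (Matrix.isUnit_iff_isUnit_det M).1 hPD.isUnit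
  have hMxA : M *ᵥ xA = (Cᵀ *ᵥ y - fun j => d j.1) := by
    rw [hxA, Matrix.mulVec_mulVec, Matrix.mul_nonsing_inv _ hdet, Matrix.one_mulVec]
  -- vectors
  set dsub : {i // i ∈ A} → ℝ := fun j => d j.1 with hdsub
  set xsub : {i // i ∈ A} → ℝ := fun j => xdag j.1 with hxsub
  set bsub : {i // i ∈ B} → ℝ := fun j => xdag j.1 with hbsub
  set e : {i // i ∈ A} → ℝ := xA + dsub - xsub with he
  set E := extv A e with hE
  set Dv := extv A dsub with hDv
  set Bv := extv B bsub with hBv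
  -- decomposition of xdag
  have hdecomp : xdag = extv A xsub + Bv := by
    funext i
    by_cases hiA' : i ∈ A
    · have hiB : i ∉ B := Finset.disjoint_left.1 hdisj hiA'
      simp [extv, hBv, hiA', hiB, hxsub]
    · by_cases hiB : i ∈ B
      · simp [extv, hBv, hiA', hiB, hbsub]
      · have : i ∉ Adag := by
          rw [← hABun]
          simp [hiA', hiB]
        have hz : xdag i = 0 := by
          by_contra hnz
          exact this (hAdag ▸ Finset.mem_filter.2 ⟨Finset.mem_univ i, hnz⟩)
        simp [extv, hBv, hiA', hiB, hz]
  -- the key equation for M *ᵥ e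
  have hMe : M *ᵥ e = Cᵀ *ᵥ (Ψ *ᵥ Bv) + (M *ᵥ dsub - dsub) := by
    have h1 : Cᵀ *ᵥ y = M *ᵥ xsub + Cᵀ *ᵥ (Ψ *ᵥ Bv) := by
      rw [hy, hdecomp, Matrix.mulVec_add, Matrix.mulVec_add, ext_mulVec, ← hC,
        hMdef, ← Matrix.mulVec_mulVec]
    rw [he, Matrix.mulVec_sub, Matrix.mulVec_add, hMxA, h1]
    funext j
    simp
    ring
  -- scalar quantities
  have hCe : C *ᵥ e = Ψ *ᵥ E := by rw [hE, ext_mulVec, hC]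
  have hCd : C *ᵥ dsub = Ψ *ᵥ Dv := by rw [hDv, ext_mulVec, hC]
  -- (i) lower bound for ∑ e (M e)
  have hiplow : (1 - δ) * ∑ j : {i // i ∈ A}, e j ^ 2 ≤
      ∑ j, e j * (M *ᵥ e) j := by
    have h1 : ∑ j, e j * (M *ᵥ e) j = ∑ j, (C *ᵥ e) j ^ 2 := by
      rw [hMdef, ← Matrix.mulVec_mulVec]
      rw [dot_tr C e (C *ᵥ e)]
      exact Finset.sum_congr rfl fun j _ => (pow_two _).symm
    rw [h1]
    exact hlow e
  -- (ii) upper bound via cross terms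
  have hsqE : ∑ i, E i ^ 2 = ∑ j : {i // i ∈ A}, e j ^ 2 := sum_sq_ext A e
  set N := Real.sqrt (∑ i, E i ^ 2) with hN
  have hN0 : 0 ≤ N := Real.sqrt_nonneg _
  have hN2 : N ^ 2 = ∑ i, E i ^ 2 := Real.sq_sqrt (by positivity)
  -- support bounds for the cross lemma
  have hsuppEB : (Finset.univ.filter fun i => E i ≠ 0 ∨ Bv i ≠ 0).card ≤ T + 1 := by
    refine le_trans (Finset.card_le_card ?_) (le_trans (le_of_eq hABcard) (Nat.le_succ T))
    intro i hi
    simp only [Finset.mem_filter, Finset.mem_univ, true_and] at hi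
    rcases hi with hi | hi
    · exact Finset.mem_union_left _ (supp_ext A e (Finset.mem_filter.2 ⟨Finset.mem_univ i, hi⟩))
    · exact Finset.mem_union_right _ (supp_ext B bsub (Finset.mem_filter.2 ⟨Finset.mem_univ i, hi⟩))
  have hsuppED : (Finset.univ.filter fun i => E i ≠ 0 ∨ Dv i ≠ 0).card ≤ T + 1 := by
    refine le_trans (Finset.card_le_card ?_) (le_trans hAcard (Nat.le_succ T))
    intro i hi
    simp only [Finset.mem_filter, Finset.mem_univ, true_and] at hi
    rcases hi with hi | hi
    · exact supp_ext A e (Finset.mem_filter.2 ⟨Finset.mem_univ i, hi⟩)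
    · exact supp_ext A dsub (Finset.mem_filter.2 ⟨Finset.mem_univ i, hi⟩)
  have hcrossB := cross (le_of_lt hδ0) hRIP E Bv hsuppEB
  have hcrossD := cross (le_of_lt hδ0) hRIP E Dv hsuppED
  -- E ⬝ Bv = 0
  have hEBv : ∑ i, E i * Bv i = 0 := by
    apply Finset.sum_eq_zero
    intro i _
    by_cases hiA' : i ∈ A
    · have hiB : i ∉ B := Finset.disjoint_left.1 hdisj hiA'
      simp [hBv, extv, hiB]
    · simp [hE, extv, hiA']
  -- norm bounds
  have hnormB : Real.sqrt (∑ i, Bv i ^ 2) ≤ s * m := by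
    have h1 : ∑ i, Bv i ^ 2 ≤ (T : ℝ) * m ^ 2 := by
      rw [hBv, sum_sq_ext]
      calc ∑ j : {i // i ∈ B}, bsub j ^ 2 ≤ (Finset.univ : Finset {i // i ∈ B}).card • m ^ 2 := by
            apply Finset.sum_le_card_nsmul
            intro j _
            have hjB : j.1 ∈ B := j.2
            have hjA : j.1 ∉ A := Finset.disjoint_right.1 hdisj hjB
            have := hmax j.1 hjA
            calc bsub j ^ 2 = |xdag j.1| ^ 2 := by rw [hbsub]; exact (sq_abs _).symm
              _ ≤ m ^ 2 := by rw [hm]; exact pow_le_pow_left₀ (abs_nonneg _) this 2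
        _ ≤ (T : ℝ) * m ^ 2 := by
            rw [nsmul_eq_mul, Finset.card_univ, Fintype.card_coe]
            exact mul_le_mul_of_nonneg_right (by exact_mod_cast hBcard) (by positivity)
    calc Real.sqrt (∑ i, Bv i ^ 2) ≤ Real.sqrt ((T : ℝ) * m ^ 2) := Real.sqrt_le_sqrt h1
      _ = s * m := by
          rw [Real.sqrt_mul (Nat.cast_nonneg T), Real.sqrt_sq hm0, hs]
  have hnormD : Real.sqrt (∑ i, Dv i ^ 2) ≤ s * lam := by
    have h1 : ∑ i, Dv i ^ 2 ≤ (T : ℝ) * lam ^ 2 := by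
      rw [hDv, sum_sq_ext]
      calc ∑ j : {i // i ∈ A}, dsub j ^ 2
          ≤ (Finset.univ : Finset {i // i ∈ A}).card • lam ^ 2 := by
            apply Finset.sum_le_card_nsmul
            intro j _
            calc dsub j ^ 2 = |d j.1| ^ 2 := by rw [hdsub]; exact (sq_abs _).symm
              _ = lam ^ 2 := by rw [hdA j.1 j.2]
              _ ≤ lam ^ 2 := le_refl _
        _ ≤ (T : ℝ) * lam ^ 2 := by
            rw [nsmul_eq_mul, Finset.card_univ, Fintype.card_coe]
            exact mul_le_mul_of_nonneg_right (by exact_mod_cast hAcard) (by positivity)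
    calc Real.sqrt (∑ i, Dv i ^ 2) ≤ Real.sqrt ((T : ℝ) * lam ^ 2) := Real.sqrt_le_sqrt h1
      _ = s * lam := by
          rw [Real.sqrt_mul (Nat.cast_nonneg T), Real.sqrt_sq (le_of_lt hlam), hs]
  -- upper bound for ipM
  have hipup : ∑ j, e j * (M *ᵥ e) j ≤ δ * N * (s * m) + δ * N * (s * lam) := by
    have hsplit : ∑ j, e j * (M *ᵥ e) j =
        (∑ j, (Ψ *ᵥ E) j * (Ψ *ᵥ Bv) j) +
          ((∑ j, (Ψ *ᵥ E) j * (Ψ *ᵥ Dv) j) - ∑ i, E i * Dv i) := by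
      have h1 : ∑ j, e j * (M *ᵥ e) j =
          ∑ j, e j * (Cᵀ *ᵥ (Ψ *ᵥ Bv)) j + (∑ j, e j * (M *ᵥ dsub) j - ∑ j, e j * dsub j) := by
        rw [hMe]
        rw [← Finset.sum_sub_distrib, Finset.sum_add_distrib.symm]
        exact Finset.sum_congr rfl fun j _ => by simp; ring
      have h2 : ∑ j, e j * (Cᵀ *ᵥ (Ψ *ᵥ Bv)) j = ∑ j, (Ψ *ᵥ E) j * (Ψ *ᵥ Bv) j := by
        rw [dot_tr C e (Ψ *ᵥ Bv), ]
        exact Finset.sum_congr rfl fun j _ => by rw [hCe]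
      have h3 : ∑ j, e j * (M *ᵥ dsub) j = ∑ j, (Ψ *ᵥ E) j * (Ψ *ᵥ Dv) j := by
        rw [hMdef, ← Matrix.mulVec_mulVec, dot_tr C e (C *ᵥ dsub)]
        exact Finset.sum_congr rfl fun j _ => by rw [hCe, hCd]
      have h4 : ∑ j, e j * dsub j = ∑ i, E i * Dv i := by
        rw [hE, hDv, dot_ext_ext]
      rw [h1, h2, h3, h4]
    rw [hsplit]
    have hb1 : ∑ j, (Ψ *ᵥ E) j * (Ψ *ᵥ Bv) j ≤ δ * N * Real.sqrt (∑ i, Bv i ^ 2) := by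
      have := (abs_le.1 hcrossB).2
      rw [hEBv, sub_zero] at this
      exact this.trans (le_refl _)
    have hb2 : (∑ j, (Ψ *ᵥ E) j * (Ψ *ᵥ Dv) j) - ∑ i, E i * Dv i ≤
        δ * N * Real.sqrt (∑ i, Dv i ^ 2) := (abs_le.1 hcrossD).2
    have hc1 : δ * N * Real.sqrt (∑ i, Bv i ^ 2) ≤ δ * N * (s * m) :=
      mul_le_mul_of_nonneg_left hnormB (by positivity)
    have hc2 : δ * N * Real.sqrt (∑ i, Dv i ^ 2) ≤ δ * N * (s * lam) :=
      mul_le_mul_of_nonneg_left hnormD (by positivity)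
    linarith
  -- final arithmetic
  have hgoal : Real.sqrt (∑ j : {i // i ∈ A}, (xA j + d j.1 - xdag j.1) ^ 2) = N := by
    rw [hN, hsqE]
    congr 1
  rw [hgoal]
  have hkey : (1 - δ) * N ^ 2 ≤ δ * s * N * (m + lam) := by
    rw [hN2]
    calc (1 - δ) * ∑ i, E i ^ 2 = (1 - δ) * ∑ j : {i // i ∈ A}, e j ^ 2 := by rw [hsqE]
      _ ≤ ∑ j, e j * (M *ᵥ e) j := hiplow
      _ ≤ δ * N * (s * m) + δ * N * (s * lam) := hipup
      _ = δ * s * N * (m + lam) := by ring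
  have hδs : δ * (4 * s + 1) ≤ 1 := by
    have h4s : 0 < 4 * s + 1 := by linarith
    calc δ * (4 * s + 1) ≤ (1 / (4 * s + 1)) * (4 * s + 1) :=
          mul_le_mul_of_nonneg_right hAss1 (le_of_lt h4s)
      _ = 1 := by field_simp
  clear_value N s m
  by_cases hNe : N = 0
  · rw [hNe]; exact hrhs0
  have hNpos : 0 < N := lt_of_le_of_ne hN0 (Ne.symm hNe)
  have h6 : (1 - δ) * N ≤ δ * s * (m + lam) := by
    have h7 : ((1 - δ) * N) * N ≤ (δ * s * (m + lam)) * N := by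
      calc ((1 - δ) * N) * N = (1 - δ) * N ^ 2 := by ring
        _ ≤ δ * s * N * (m + lam) := hkey
        _ = (δ * s * (m + lam)) * N := by ring
    exact (mul_le_mul_iff_left₀ hNpos).1 h7
  have h8 : 4 * (δ * s) + δ ≤ 1 := by
    calc 4 * (δ * s) + δ = δ * (4 * s + 1) := by ring
      _ ≤ 1 := hδs
  have h9 : δ * s ≤ (1 - δ) / 4 := by linarith
  have h10 : δ * s * (m + lam) ≤ ((1 - δ) / 4) * (m + lam) :=
    mul_le_mul_of_nonneg_right h9 (by positivity)
  have hδpos : 0 < 1 - δ := by linarith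
  have h12 : (1 - δ) * N ≤ (1 - δ) * (1 / 4 * m + 1 / 4 * lam) := by
    calc (1 - δ) * N ≤ ((1 - δ) / 4) * (m + lam) := le_trans h6 h10
      _ = (1 - δ) * (1 / 4 * m + 1 / 4 * lam) := by ring
  exact (mul_le_mul_iff_right₀ hδpos).1 h12
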